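/- Let D = ad(Σ a_{α,i} L_{α,i}) + λ d be a derivation of 𝓑 (finitely many a_{α,i} nonzero), and suppose D(L_{β,j}) = 0 where j ≠ −β. Then a_{α,i} = 0 whenever (α−1)(j+1) ≠ (β−1)(i+1) and (α,i) ≠ (0,0), and a_{0,0} = (β/(β+j)) λ. -/
import Mathlib


noncomputable section

abbrev B := (ℤ × ℕ) →₀ ℂ

/-- basis element `L α i` -/
def L (α : ℤ) (i : ℕ) : B := Finsupp.single (α, i) 1

/-- structure constant `(α-1)(j+1) - (β-1)(i+1)` -/
def coef (p q : ℤ × ℕ) : ℂ :=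
  ((p.1 - 1) * ((q.2 : ℤ) + 1) - (q.1 - 1) * ((p.2 : ℤ) + 1) : ℤ)

/-- the Block-type bracket, as a bilinear map -/
def br : B →ₗ[ℂ] B →ₗ[ℂ] B :=
  Finsupp.lsum ℂ fun p => LinearMap.toSpanSingleton ℂ _
    (Finsupp.lsum ℂ fun q => LinearMap.toSpanSingleton ℂ _
      (coef p q • L (p.1 + q.1) (p.2 + q.2)))

/-- the outer derivation `d`, with `d (L β j) = β • L β j` -/
def dmap : B →ₗ[ℂ] B :=
  Finsupp.lsum ℂ fun p => LinearMap.toSpanSingleton ℂ _ ((p.1 : ℂ) • L p.1 p.2)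

def IsDer (D : B →ₗ[ℂ] B) : Prop := ∀ x y, D (br x y) = br (D x) y + br x (D y)

def Is2Local (Δ : B → B) : Prop :=
  ∀ x y, ∃ D : B →ₗ[ℂ] B, IsDer D ∧ Δ x = D x ∧ Δ y = D y

lemma br_L (a : B) (β : ℤ) (j : ℕ) :
    br a (L β j) = a.sum fun p c => (c * coef p (β, j)) • L (p.1 + β) (p.2 + j) := by
  rw [br, Finsupp.lsum_apply, Finsupp.sum, LinearMap.coe_sum, Finset.sum_apply]
  simp [Finsupp.sum, L, Finsupp.lsum_single, LinearMap.toSpanSingleton_apply, mul_smul, smul_smul]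

lemma dmap_L (β : ℤ) (j : ℕ) : dmap (L β j) = (β : ℂ) • L β j := by
  simp [dmap, L, Finsupp.lsum_single, LinearMap.toSpanSingleton_apply]

lemma br_L_apply (a : B) (β : ℤ) (j : ℕ) (α : ℤ) (i : ℕ) :
    (br a (L β j)) (α + β, i + j) = a (α, i) * coef (α, i) (β, j) := by
  rw [br_L, Finsupp.sum_apply]
  have hc : ∀ p ∈ a.support, ((a p * coef p (β, j)) • L (p.1 + β) (p.2 + j)) (α + β, i + j)
      = if p = (α, i) then a (α, i) * coef (α, i) (β, j) else 0 := by
    intro p hp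
    rw [Finsupp.smul_apply, L, Finsupp.single_apply]
    have : ((p.1 + β, p.2 + j) : ℤ × ℕ) = (α + β, i + j) ↔ p = (α, i) := by
      simp [Prod.ext_iff]
    simp only [this]
    split
    · next he => subst he; simp
    · simp
  rw [Finsupp.sum_congr (g2 := fun p _ => if p = (α, i) then a (α, i) * coef (α, i) (β, j) else 0) hc, Finsupp.sum_ite_eq']
  split
  · rfl
  · next hs => rw [Finsupp.notMem_support_iff.mp hs, zero_mul]

theorem vanishing_der_structure (β : ℤ) (j : ℕ) (hβj : β + (j : ℤ) ≠ 0)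
    (a : B) (lam : ℂ)
    (h : br a (L β j) + lam • dmap (L β j) = 0) :
    (∀ (α : ℤ) (i : ℕ), (α - 1) * ((j : ℤ) + 1) ≠ (β - 1) * ((i : ℤ) + 1) →
      (α, i) ≠ ((0 : ℤ), (0 : ℕ)) → a (α, i) = 0) ∧
    a (0, 0) = (β : ℂ) / ((β : ℂ) + (j : ℂ)) * lam := by
  have key : ∀ (α : ℤ) (i : ℕ),
      a (α, i) * coef (α, i) (β, j)
        + lam * (β : ℂ) * (if ((β, j) : ℤ × ℕ) = (α + β, i + j) then 1 else 0) = 0 := by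
    intro α i
    have hh := DFunLike.congr_fun h (α + β, i + j)
    rw [Finsupp.add_apply, br_L_apply, Finsupp.smul_apply, dmap_L, Finsupp.smul_apply, L,
      Finsupp.single_apply, Finsupp.zero_apply] at hh
    simpa [smul_eq_mul, mul_assoc, mul_ite] using hh
  constructor
  · intro α i hne hne0
    have hk := key α i
    have hif : ¬ (((β, j) : ℤ × ℕ) = (α + β, i + j)) := by
      simp only [Prod.ext_iff, not_and]
      intro h1 h2
      exact absurd (by constructor <;> omega : α = 0 ∧ i = 0)
        (by simpa [Prod.ext_iff] using hne0)
    rw [if_neg hif, mul_zero, add_zero] at hk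
    have hcoef : coef (α, i) (β, j) ≠ 0 := by
      rw [coef]
      exact_mod_cast fun hc => hne (sub_eq_zero.mp (by exact_mod_cast hc))
    exact (mul_eq_zero.mp hk).resolve_right hcoef
  · have hk := key 0 0
    simp only [zero_add, if_pos rfl, mul_one, if_true] at hk
    have hcoef : coef ((0 : ℤ), (0 : ℕ)) (β, j) = -((β : ℂ) + (j : ℂ)) := by
      rw [coef]; push_cast; ring
    rw [hcoef] at hk
    have hne : (β : ℂ) + (j : ℂ) ≠ 0 := by
      exact_mod_cast fun hc => hβj (by exact_mod_cast hc)
    field_simp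
    linear_combination -hk

end
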